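/- For every integer m ≥ 2, Σ_{k=1}^{m−1} 1/sin²(kπ/m) = (m² − 1)/3. -/

import Mathlib

open Real Complex Finset

noncomputable def ee (m : ℕ) (n : ℤ) : ℂ := Complex.exp (2 * Real.pi * Complex.I * n / m)

lemma ee_add (m : ℕ) (a b : ℤ) : ee m (a + b) = ee m a * ee m b := by
  rw [ee, ee, ee, ← Complex.exp_add]
  congr 1
  push_cast
  ring

lemma ee_zero (m : ℕ) : ee m 0 = 1 := by simp [ee]

lemma ee_pow (m : ℕ) (n : ℤ) (j : ℕ) : ee m n ^ j = ee m (n * j) := by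
  rw [ee, ee, ← Complex.exp_nat_mul]
  congr 1
  push_cast
  ring

lemma ee_eq_one_iff (m : ℕ) (hm : m ≠ 0) (n : ℤ) : ee m n = 1 ↔ (m : ℤ) ∣ n := by
  have hm' : (m : ℂ) ≠ 0 := Nat.cast_ne_zero.2 hm
  rw [ee, Complex.exp_eq_one_iff]
  constructor
  · rintro ⟨k, hk⟩
    refine ⟨k, ?_⟩
    show n = (m:ℤ) * k
    have hpi : (Real.pi : ℂ) ≠ 0 := Complex.ofReal_ne_zero.2 Real.pi_ne_zero
    have h2 : (2 : ℂ) * Real.pi * Complex.I ≠ 0 := by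
      simp [Complex.I_ne_zero, hpi]
    have h3 : (n : ℂ) = (k : ℂ) * m := by
      field_simp at hk
      have h4 : (2 : ℂ) * Real.pi * Complex.I * n = 2 * Real.pi * Complex.I * (k * m) := by
        linear_combination (2 * (Real.pi : ℂ) * Complex.I) * hk
      exact mul_left_cancel₀ h2 h4
    have h5 : n = k * (m:ℤ) := by exact_mod_cast h3
    rw [h5]; ring
  · rintro ⟨k, rfl⟩
    exact ⟨k, by field_simp; norm_cast⟩

lemma ee_geom (m : ℕ) (hm : m ≠ 0) (n : ℤ) :
    (∑ k ∈ range m, ee m (n * k)) = if (m : ℤ) ∣ n then (m : ℂ) else 0 := by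
  split_ifs with h
  · have : ∀ k ∈ range m, ee m (n * k) = 1 := by
      intro k _
      rw [ee_eq_one_iff m hm]
      exact Dvd.dvd.mul_right h k
    rw [Finset.sum_congr rfl this]
    simp
  · have hx : ee m n ≠ 1 := fun hc => h ((ee_eq_one_iff m hm n).1 hc)
    have : (∑ k ∈ range m, ee m (n * k)) = ∑ k ∈ range m, (ee m n) ^ k := by
      refine Finset.sum_congr rfl fun k _ => ?_
      rw [ee_pow]
    rw [this, geom_sum_eq hx]
    have : ee m n ^ m = 1 := by
      rw [ee_pow, ee_eq_one_iff m hm]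
      exact ⟨n, mul_comm n m⟩
    rw [this]
    simp

lemma poly_id (x : ℂ) (M : ℕ) :
    (1 - x) * ∑ j ∈ range M, (j : ℂ) * x ^ j =
      (∑ j ∈ range M, x ^ j) - 1 - ((M : ℂ) - 1) * x ^ M := by
  induction M with
  | zero => simp
  | succ n ih =>
    rw [Finset.sum_range_succ, Finset.sum_range_succ (f := fun j => x ^ j)]
    push_cast
    ring_nf
    ring_nf at ih
    linear_combination ih

lemma ee_inv_sum (m : ℕ) (hm : m ≠ 0) (n : ℤ) (hn : ¬ (m : ℤ) ∣ n) :
    (1 - ee m n) * ∑ j ∈ range m, (j : ℂ) * ee m (n * j) = -(m : ℂ) := by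
  have h1 : ∑ j ∈ range m, (j : ℂ) * ee m (n * j) = ∑ j ∈ range m, (j : ℂ) * (ee m n) ^ j := by
    refine Finset.sum_congr rfl fun j _ => by rw [ee_pow]
  rw [h1, poly_id]
  have h2 : (∑ j ∈ range m, (ee m n) ^ j) = 0 := by
    have := ee_geom m hm n
    simp only [hn, if_false] at this
    rw [← this]
    exact Finset.sum_congr rfl fun j _ => by rw [ee_pow]
  have h3 : ee m n ^ m = 1 := by
    rw [ee_pow, ee_eq_one_iff m hm]
    exact ⟨n, mul_comm n m⟩
  rw [h2, h3]
  ring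

lemma sum_sq_id (M : ℕ) : 6 * ∑ j ∈ range M, (j : ℂ) ^ 2 = M * (M - 1) * (2 * M - 1) := by
  induction M with
  | zero => simp
  | succ n ih =>
    rw [Finset.sum_range_succ]
    push_cast
    push_cast at ih
    linear_combination ih

lemma sum_id (M : ℕ) : 2 * ∑ j ∈ range M, (j : ℂ) = M * (M - 1) := by
  induction M with
  | zero => simp
  | succ n ih =>
    rw [Finset.sum_range_succ]
    push_cast
    push_cast at ih
    linear_combination ih

lemma term_eq (m : ℕ) (hm : 2 ≤ m) (k : ℕ) (hk1 : 1 ≤ k) (hk2 : k < m) :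
    ((1 / Real.sin ((k : ℝ) * Real.pi / m) ^ 2 : ℝ) : ℂ) =
      4 / (m : ℂ) ^ 2 *
        ∑ j ∈ range m, ∑ l ∈ range m, (j : ℂ) * l * ee m ((k : ℤ) * ((j : ℤ) - l)) := by
  have hmne : m ≠ 0 := by omega
  have hm0 : (m : ℂ) ≠ 0 := Nat.cast_ne_zero.2 hmne
  have hdvd : ¬ (m : ℤ) ∣ (k : ℤ) := by
    intro h
    have := Int.le_of_dvd (by exact_mod_cast hk1) h
    omega
  have hdvd' : ¬ (m : ℤ) ∣ (-(k : ℤ)) := fun h => hdvd ((dvd_neg).1 h)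
  set Sk := ∑ j ∈ range m, (j : ℂ) * ee m ((k : ℤ) * j) with hSk
  set Sk' := ∑ l ∈ range m, (l : ℂ) * ee m (-(k : ℤ) * l) with hSk'
  have h1 : (1 - ee m k) * Sk = -(m : ℂ) := ee_inv_sum m hmne _ hdvd
  have h2 : (1 - ee m (-(k : ℤ))) * Sk' = -(m : ℂ) := ee_inv_sum m hmne _ hdvd'
  set x : ℝ := (k : ℝ) * Real.pi / m with hx
  have hmul : ee m (k : ℤ) * ee m (-(k : ℤ)) = 1 := by
    rw [← ee_add]; simp [ee_zero]
  have hcos : ee m (k : ℤ) + ee m (-(k : ℤ)) = ((2 * Real.cos (2 * Real.pi * k / m) : ℝ) : ℂ) := by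
    have e1 : ee m (k : ℤ) = Complex.exp (((2 * Real.pi * k / m : ℝ) : ℂ) * Complex.I) := by
      rw [ee]; congr 1; push_cast; ring
    have e2 : ee m (-(k : ℤ)) = Complex.exp (-((2 * Real.pi * k / m : ℝ) : ℂ) * Complex.I) := by
      rw [ee]; congr 1; push_cast; ring
    rw [e1, e2, ← Complex.two_cos, ← Complex.ofReal_cos]
    push_cast
    ring
  have hsin : ((Real.sin x : ℝ) : ℂ) ^ 2 * 4 = (1 - ee m (k : ℤ)) * (1 - ee m (-(k : ℤ))) := by
    have hreal : Real.sin x ^ 2 * 4 = 2 - 2 * Real.cos (2 * Real.pi * k / m) := by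
      have harg : 2 * Real.pi * k / m = 2 * x := by rw [hx]; ring
      rw [harg, Real.cos_two_mul]
      nlinarith [Real.sin_sq_add_cos_sq x]
    have expand : (1 - ee m (k : ℤ)) * (1 - ee m (-(k : ℤ)))
        = 2 - (ee m (k : ℤ) + ee m (-(k : ℤ))) := by
      linear_combination hmul
    rw [expand, hcos]
    have hc := congrArg (Complex.ofReal) hreal
    push_cast at hc ⊢
    linear_combination hc
  have hsne : Real.sin x ≠ 0 := by
    apply ne_of_gt
    apply Real.sin_pos_of_pos_of_lt_pi
    · apply div_pos
      · apply mul_pos _ Real.pi_pos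
        exact_mod_cast hk1
      · exact_mod_cast Nat.pos_of_ne_zero hmne
    · rw [div_lt_iff₀ (by exact_mod_cast Nat.pos_of_ne_zero hmne : (0:ℝ) < m)]
      have : (k : ℝ) < m := by exact_mod_cast hk2
      nlinarith [Real.pi_pos]
  have hSS : (1 - ee m (k : ℤ)) * (1 - ee m (-(k : ℤ))) * (Sk * Sk') = (m : ℂ) ^ 2 := by
    linear_combination ((1 - ee m (-(k : ℤ))) * Sk') * h1 - (m : ℂ) * h2
  have key : ((Real.sin x : ℝ) : ℂ) ^ 2 * 4 * (Sk * Sk') = (m : ℂ) ^ 2 := by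
    rw [hsin]; exact hSS
  have hF : Sk * Sk' = ∑ j ∈ range m, ∑ l ∈ range m, (j : ℂ) * l * ee m ((k : ℤ) * ((j : ℤ) - l)) := by
    rw [hSk, hSk', Finset.sum_mul_sum]
    refine Finset.sum_congr rfl fun j _ => Finset.sum_congr rfl fun l _ => ?_
    have : ee m ((k : ℤ) * ((j : ℤ) - l)) = ee m ((k : ℤ) * j) * ee m (-(k : ℤ) * l) := by
      rw [← ee_add]; congr 1; ring
    rw [this]; ring
  rw [← hF]
  have hsC : ((Real.sin x : ℝ) : ℂ) ≠ 0 := Complex.ofReal_ne_zero.2 hsne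
  rw [Complex.ofReal_sin] at key hsC
  push_cast
  field_simp
  linear_combination -key

/-- For every integer `m ≥ 2`, `Σ_{k=1}^{m−1} 1/sin²(kπ/m) = (m² − 1)/3`. -/
theorem sum_inv_sin_sq (m : ℕ) (hm : 2 ≤ m) :
    (∑ k ∈ Finset.Icc 1 (m - 1), 1 / Real.sin ((k : ℝ) * Real.pi / m) ^ 2) =
      ((m : ℝ) ^ 2 - 1) / 3 := by
  have hmne : m ≠ 0 := by omega
  have hm0 : (m : ℂ) ≠ 0 := Nat.cast_ne_zero.2 hmne
  apply Complex.ofReal_injective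
  set F : ℕ → ℂ := fun k =>
    ∑ j ∈ range m, ∑ l ∈ range m, (j : ℂ) * l * ee m ((k : ℤ) * ((j : ℤ) - l)) with hF
  have hIcc : Finset.Icc 1 (m - 1) = Finset.Ico 1 m := by
    rw [← Finset.Ico_add_one_right_eq_Icc]
    congr 1
    omega
  have step1 : ((∑ k ∈ Finset.Icc 1 (m - 1), 1 / Real.sin ((k : ℝ) * Real.pi / m) ^ 2 : ℝ) : ℂ)
      = 4 / (m : ℂ) ^ 2 * ∑ k ∈ Finset.Ico 1 m, F k := by
    rw [Complex.ofReal_sum, hIcc, Finset.mul_sum]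
    refine Finset.sum_congr rfl fun k hk => ?_
    rw [Finset.mem_Ico] at hk
    exact term_eq m hm k hk.1 hk.2
  have hbot : ∑ k ∈ range m, F k = F 0 + ∑ k ∈ Finset.Ico 1 m, F k := by
    rw [Finset.range_eq_Ico]
    exact Finset.sum_eq_sum_Ico_succ_bot (by omega) F
  have hF0 : F 0 = (∑ j ∈ range m, (j : ℂ)) * (∑ l ∈ range m, (l : ℂ)) := by
    rw [hF, Finset.sum_mul_sum]
    refine Finset.sum_congr rfl fun j _ => Finset.sum_congr rfl fun l _ => ?_
    simp [ee_zero]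
  have hswap : ∑ k ∈ range m, F k = (m : ℂ) * ∑ j ∈ range m, (j : ℂ) ^ 2 := by
    rw [hF]
    rw [Finset.sum_comm]
    have inner : ∀ j ∈ range m,
        (∑ k ∈ range m, ∑ l ∈ range m, (j : ℂ) * l * ee m ((k : ℤ) * ((j : ℤ) - l)))
          = (j : ℂ) ^ 2 * m := by
      intro j hj
      rw [Finset.sum_comm]
      have inner2 : ∀ l ∈ range m,
          (∑ k ∈ range m, (j : ℂ) * l * ee m ((k : ℤ) * ((j : ℤ) - l)))
            = (j : ℂ) * l * (if (m : ℤ) ∣ ((j : ℤ) - l) then (m : ℂ) else 0) := by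
        intro l _
        rw [← Finset.mul_sum]
        congr 1
        have : ∀ k ∈ range m, ee m ((k : ℤ) * ((j : ℤ) - l)) = ee m (((j : ℤ) - l) * k) := by
          intro k _
          congr 1
          ring
        rw [Finset.sum_congr rfl this, ee_geom m hmne]
      rw [Finset.sum_congr rfl inner2]
      rw [Finset.mem_range] at hj
      rw [Finset.sum_eq_single j]
      · simp only [sub_self, dvd_zero, if_true]
        ring
      · intro l hl hne
        rw [Finset.mem_range] at hl
        have : ¬ (m : ℤ) ∣ ((j : ℤ) - l) := by
          intro hdvd
          have habs : |(j : ℤ) - l| < m := by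
            rw [abs_lt]
            constructor <;> omega
          have := Int.eq_zero_of_abs_lt_dvd hdvd habs
          omega
        simp [this]
      · intro hj'
        exact absurd (Finset.mem_range.2 hj) hj'
    rw [Finset.sum_congr rfl inner, ← Finset.sum_mul]
    ring
  have hS : (∑ j ∈ range m, (j : ℂ)) = m * (m - 1) / 2 := by
    linear_combination (sum_id m) / 2
  have hSq : (∑ j ∈ range m, (j : ℂ) ^ 2) = m * (m - 1) * (2 * m - 1) / 6 := by
    linear_combination (sum_sq_id m) / 6
  have hIco : ∑ k ∈ Finset.Ico 1 m, F k
      = (m : ℂ) * (m * (m - 1) * (2 * m - 1) / 6) - (m * (m - 1) / 2) * (m * (m - 1) / 2) := by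
    have := hbot
    rw [hswap, hF0, hS, hSq] at this
    linear_combination -this
  rw [step1, hIco]
  push_cast
  field_simp
  ring
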